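/- arXiv:1807.09376 — 2 statements merged into one kernel-verified Lean document; each statement's English description precedes it below -/
import Mathlib

section
/- For every positive integer s, IR(sP_3, 2K_2) = 3s + 3. -/
open SimpleGraph

/-- The disjoint union of `s` copies of the graph `G`. -/
def SimpleGraph.Copies {β : Type*} (s : ℕ) (G : SimpleGraph β) :
    SimpleGraph (Fin s × β) where
  Adj x y := x.1 = y.1 ∧ G.Adj x.2 y.2
  symm := ⟨fun x y h => ⟨h.1.symm, G.symm.symm _ _ h.2⟩⟩
  loopless := ⟨fun x h => G.loopless.irrefl x.2 h.2⟩

/-- `F` strongly arrows `(G, H)`: every red-blue (`true`/`false`) colouring of the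
edges of `F` yields a red induced copy of `G` or a blue induced copy of `H`. -/
def StronglyArrows {α β γ : Type*}
    (F : SimpleGraph α) (G : SimpleGraph β) (H : SimpleGraph γ) : Prop :=
  ∀ c : Sym2 α → Bool,
    (∃ f : G ↪g F, ∀ a b : β, G.Adj a b → c s(f a, f b) = true) ∨
    (∃ f : H ↪g F, ∀ a b : γ, H.Adj a b → c s(f a, f b) = false)

/-- The induced Ramsey number `IR(G, H)`. -/
noncomputable def IR {β γ : Type*} (G : SimpleGraph β) (H : SimpleGraph γ) : ℕ :=
  sInf {n : ℕ | ∃ F : SimpleGraph (Fin n), StronglyArrows F G H}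

/-- The single-edge graph `K_2`. -/
def K2 : SimpleGraph (Fin 2) := ⊤

/-- Two disjoint edges `2K_2`. -/
def twoK2 : SimpleGraph (Fin 2 × Fin 2) := SimpleGraph.Copies 2 K2


instance : DecidableRel (pathGraph 3).Adj := fun _ _ => decidable_of_iff' _ pathGraph_adj
instance {β : Type*} {s : ℕ} {G : SimpleGraph β} [DecidableEq β] [DecidableRel G.Adj] :
    DecidableRel (SimpleGraph.Copies s G).Adj :=
  fun x y => decidable_of_iff (x.1 = y.1 ∧ G.Adj x.2 y.2) Iff.rfl
instance : DecidableRel twoK2.Adj :=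
  fun x y => decidable_of_iff (x.1 = y.1 ∧ x.2 ≠ y.2) Iff.rfl

lemma copies_arrows (s : ℕ) :
    StronglyArrows (SimpleGraph.Copies (s+1) (pathGraph 3))
      (SimpleGraph.Copies s (pathGraph 3)) twoK2 := by
  classical
  intro c
  set Blue : Fin (s+1) → Prop :=
    fun t => c s((t,0),(t,1)) = false ∨ c s((t,1),(t,2)) = false with hBlue
  by_cases hb : ∃ i j : Fin (s+1), i ≠ j ∧ Blue i ∧ Blue j
  · right
    obtain ⟨i, j, hij, hi, hj⟩ := hb
    -- for each blue component pick a blue edge (lo, lo+1)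
    have pick : ∀ t : Fin (s+1), Blue t →
        ∃ lo : Fin 3, (lo = 0 ∨ lo = 1) ∧ c s((t, lo), (t, lo + 1)) = false := by
      intro t ht
      rcases ht with h1 | h2
      · exact ⟨0, Or.inl rfl, by simpa using h1⟩
      · exact ⟨1, Or.inr rfl, by simpa using h2⟩
    obtain ⟨li, hli, hci⟩ := pick i hi
    obtain ⟨lj, hlj, hcj⟩ := pick j hj
    let κ : Fin 2 → Fin (s+1) := fun a => if a = 0 then i else j
    let lam : Fin 2 → Fin 3 := fun a => if a = 0 then li else lj
    let f : Fin 2 × Fin 2 → Fin (s+1) × Fin 3 :=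
      fun p => (κ p.1, lam p.1 + if p.2 = 0 then 0 else 1)
    have hκinj : Function.Injective κ := by
      intro a b hab
      fin_cases a <;> fin_cases b <;> simp_all [κ] <;> exact absurd hab hij
    have hfinj : Function.Injective f := by
      rintro ⟨a, u⟩ ⟨b, v⟩ hf
      have h1 : κ a = κ b := congrArg Prod.fst hf
      have h2 : a = b := hκinj h1
      subst h2
      have h3 : lam a + (if u = 0 then (0:Fin 3) else 1) = lam a + (if v = 0 then 0 else 1) :=
        congrArg Prod.snd hf
      have h4 : (if u = 0 then (0:Fin 3) else 1) = (if v = 0 then 0 else 1) := by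
        exact add_left_cancel h3
      fin_cases u <;> fin_cases v <;> simp_all
    have hmap : ∀ p q : Fin 2 × Fin 2,
        (SimpleGraph.Copies (s+1) (pathGraph 3)).Adj (f p) (f q) ↔ twoK2.Adj p q := by
      rintro ⟨a, u⟩ ⟨b, v⟩
      constructor
      · rintro ⟨h1, h2⟩
        have hab : a = b := hκinj h1
        subst hab
        refine ⟨rfl, ?_⟩
        intro huv
        rw [show u = v from huv] at h2
        exact (pathGraph 3).loopless.irrefl _ h2
      · rintro ⟨h1, h2⟩
        have hab : a = b := h1
        subst hab
        refine ⟨rfl, ?_⟩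
        have : u ≠ v := h2
        have hl : lam a = 0 ∨ lam a = 1 := by
          fin_cases a <;> simp [lam, hli, hlj]
        fin_cases u <;> fin_cases v <;> rcases hl with h | h <;>
          simp_all <;> (simp only [f, h]; simp [pathGraph_adj])
    refine ⟨⟨⟨f, hfinj⟩, hmap _ _⟩, ?_⟩
    rintro ⟨a, u⟩ ⟨b, v⟩ hadj
    have hab : a = b := hadj.1
    subst hab
    have huv : u ≠ v := hadj.2
    have hc' : c s((κ a, lam a), (κ a, lam a + 1)) = false := by
      fin_cases a <;> simp [κ, lam] <;> assumption
    show c s((κ a, lam a + if u = 0 then 0 else 1), (κ a, lam a + if v = 0 then 0 else 1)) = false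
    fin_cases u <;> fin_cases v <;> simp_all
    all_goals first
      | (simpa using hc')
      | (rw [Sym2.eq_swap]; simpa using hc')
  · left
    push_neg at hb
    let p : Fin (s+1) := if h : ∃ i, Blue i then h.choose else Fin.last s
    have hgood : ∀ t : Fin (s+1), t ≠ p → ¬ Blue t := by
      intro t ht hBt
      by_cases h : ∃ i, Blue i
      · have hp : Blue p := by simpa [p, h] using h.choose_spec
        exact (hb t p ht hBt) hp
      · exact h ⟨t, hBt⟩
    set f : Fin s × Fin 3 → Fin (s+1) × Fin 3 := fun q => (p.succAbove q.1, q.2) with hf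
    have hfinj : Function.Injective f := by
      rintro ⟨a, u⟩ ⟨b, v⟩ h
      have h1 : p.succAbove a = p.succAbove b := congrArg Prod.fst h
      have h2 : u = v := congrArg Prod.snd h
      exact Prod.ext (Fin.succAbove_right_injective h1) h2
    have hmap : ∀ q r : Fin s × Fin 3,
        (SimpleGraph.Copies (s+1) (pathGraph 3)).Adj (f q) (f r) ↔
          (SimpleGraph.Copies s (pathGraph 3)).Adj q r := by
      rintro ⟨a, u⟩ ⟨b, v⟩
      constructor
      · rintro ⟨h1, h2⟩
        exact ⟨Fin.succAbove_right_injective h1, h2⟩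
      · rintro ⟨h1, h2⟩
        exact ⟨congrArg p.succAbove h1, h2⟩
    refine ⟨⟨⟨f, hfinj⟩, hmap _ _⟩, ?_⟩
    rintro ⟨a, u⟩ ⟨b, v⟩ hadj
    obtain ⟨h1, h2⟩ := hadj
    cases h1
    have hnb : ¬ Blue (p.succAbove a) := hgood _ (Fin.succAbove_ne p a)
    simp only [hBlue, not_or, Bool.not_eq_false] at hnb
    have h01 : c s((p.succAbove a, 0), (p.succAbove a, 1)) = true := hnb.1
    have h12 : c s((p.succAbove a, 1), (p.succAbove a, 2)) = true := hnb.2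
    have hval := pathGraph_adj.mp h2
    show c s((p.succAbove a, u), (p.succAbove a, v)) = true
    fin_cases u <;> fin_cases v <;> simp_all
    all_goals first
      | (simpa using h01)
      | (simpa using h12)
      | (rw [Sym2.eq_swap]; simpa using h01)
      | (rw [Sym2.eq_swap]; simp_all)

lemma arrows_of_iso {α α' β γ : Type*} {F : SimpleGraph α} {F' : SimpleGraph α'}
    (φ : F ≃g F') {G : SimpleGraph β} {H : SimpleGraph γ}
    (hA : StronglyArrows F G H) : StronglyArrows F' G H := by
  intro c
  rcases hA (fun e => c (e.map φ)) with ⟨f, hf⟩ | ⟨f, hf⟩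
  · left
    refine ⟨φ.toEmbedding.comp f, fun a b hab => ?_⟩
    have := hf a b hab
    simpa [Sym2.map_pair_eq] using this
  · right
    refine ⟨φ.toEmbedding.comp f, fun a b hab => ?_⟩
    have := hf a b hab
    simpa [Sym2.map_pair_eq] using this

lemma upper_mem (s : ℕ) : ∃ F : SimpleGraph (Fin (3*s+3)),
    StronglyArrows F (SimpleGraph.Copies s (pathGraph 3)) twoK2 := by
  have e : Fin (s+1) × Fin 3 ≃ Fin (3*s+3) :=
    finProdFinEquiv.trans (finCongr (by ring))
  refine ⟨(SimpleGraph.Copies (s+1) (pathGraph 3)).comap e.symm, ?_⟩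
  exact arrows_of_iso (SimpleGraph.Iso.comap e.symm _).symm (copies_arrows s)

-- counting helper
lemma card_avoid {n s : ℕ} (g : Fin s × Fin 3 → Fin n) (hg : Function.Injective g)
    (S : Finset (Fin n)) (hS : ∀ p, g p ∉ S) : 3 * s + S.card ≤ n := by
  have hdisj : Disjoint (Finset.univ.image g) S := by
    rw [Finset.disjoint_left]
    rintro a ha haS
    obtain ⟨p, _, rfl⟩ := Finset.mem_image.mp ha
    exact hS p haS
  have h1 : (Finset.univ.image g ∪ S).card ≤ n := by
    simpa using Finset.card_le_univ (Finset.univ.image g ∪ S)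
  rw [Finset.card_union_of_disjoint hdisj, Finset.card_image_of_injective _ hg] at h1
  simpa [Fintype.card_prod, mul_comm] using h1

abbrev SP (s : ℕ) := SimpleGraph.Copies s (pathGraph 3)

lemma fin3_cases : ∀ k : Fin 3, k = 0 ∨ k = 1 ∨ k = 2 := by decide
lemma path_adj_if : ∀ k : Fin 3, (pathGraph 3).Adj k (if k = 1 then 0 else 1) := by decide
lemma path01 : (pathGraph 3).Adj 0 1 := by decide
lemma path12 : (pathGraph 3).Adj 1 2 := by decide

lemma nbr_adj (i : Fin s) (k : Fin 3) : (SP s).Adj (i, k) (i, if k = 1 then 0 else 1) :=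
  ⟨rfl, path_adj_if k⟩

lemma avoid_vertex {n s : ℕ} {F : SimpleGraph (Fin n)} (g : SP s ↪g F) (v : Fin n)
    (hred : ∀ a b, (SP s).Adj a b → v ∉ (s(g a, g b) : Sym2 (Fin n))) :
    ∀ p, g p ≠ v := by
  rintro ⟨i, k⟩ h
  exact (hred _ _ (nbr_adj i k)) (by rw [Sym2.mem_iff]; left; exact h.symm)

lemma not_in_image {n s : ℕ} {F : SimpleGraph (Fin n)} (g : SP s ↪g F) (m e x : Fin n)
    (hxg : ∀ p, g p ≠ x)
    (hm : ∀ w, F.Adj m w → w = e ∨ w = x)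
    (he : ∀ w, F.Adj e w → w = m) :
    (∀ p, g p ≠ m) ∧ (∀ p, g p ≠ e) := by
  have hmi : ∀ p, g p ≠ m := by
    rintro ⟨i, k⟩ hk
    have adj01 : F.Adj (g (i,0)) (g (i,1)) := g.map_adj_iff.mpr ⟨rfl, path01⟩
    have adj12 : F.Adj (g (i,1)) (g (i,2)) := g.map_adj_iff.mpr ⟨rfl, path12⟩
    rcases fin3_cases k with rfl | rfl | rfl
    · -- g (i,0) = m
      rw [hk] at adj01
      rcases hm _ adj01 with h1 | h1
      · -- g (i,1) = e
        rw [h1] at adj12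
        have := he _ adj12
        rw [← hk] at this
        have := g.injective this
        simp at this
      · exact hxg _ h1
    · -- g (i,1) = m : both neighbours must be e (x excluded)
      rw [hk] at adj01 adj12
      have h0 : g (i,0) = e := by
        rcases hm _ adj01.symm with h | h
        · exact h
        · exact absurd h (hxg _)
      have h2 : g (i,2) = e := by
        rcases hm _ adj12 with h | h
        · exact h
        · exact absurd h (hxg _)
      have := g.injective (h0.trans h2.symm)
      simp at this
    · -- g (i,2) = m
      rw [hk] at adj12
      rcases hm _ adj12.symm with h1 | h1
      · rw [h1] at adj01
        have := he _ adj01.symm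
        rw [← hk] at this
        have := g.injective this
        simp at this
      · exact hxg _ h1
  refine ⟨hmi, ?_⟩
  rintro ⟨i, k⟩ hk
  have hadj : F.Adj (g (i,k)) (g (i, if k = 1 then 0 else 1)) := g.map_adj_iff.mpr (nbr_adj i k)
  rw [hk] at hadj
  exact hmi _ (he _ hadj)

lemma structure0 {n s : ℕ} {F : SimpleGraph (Fin n)} (h : SP s ↪g F) (c d : Fin n)
    (hc : ∀ p, h p ≠ c) (hd : ∀ p, h p ≠ d)
    (hsurj : ∀ w, w ≠ c → w ≠ d → ∃ p, h p = w)
    (i : Fin s) (e e' : Fin 3) (hee : (e = 0 ∧ e' = 2) ∨ (e = 2 ∧ e' = 0))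
    (hac : ¬ F.Adj (h (i,e)) c) (had : ¬ F.Adj (h (i,e)) d)
    (hbc : ¬ F.Adj (h (i,1)) c) (hbd : ¬ F.Adj (h (i,1)) d) :
    F.Adj (h (i,1)) (h (i,e')) ∧
    (∀ w, F.Adj (h (i,e)) w → w = h (i,1)) ∧
    (∀ w, F.Adj (h (i,1)) w → w = h (i,e) ∨ w = h (i,e')) ∧
    (∀ w, F.Adj (h (i,e')) w → w = h (i,1) ∨ w = c ∨ w = d) := by
  refine ⟨?_, ?_, ?_, ?_⟩
  · refine h.map_adj_iff.mpr ⟨rfl, ?_⟩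
    rcases hee with ⟨_, rfl⟩ | ⟨_, rfl⟩
    · exact path12
    · exact path01.symm
  · intro w hw
    by_cases hwc : w = c
    · exact absurd (hwc ▸ hw) hac
    by_cases hwd : w = d
    · exact absurd (hwd ▸ hw) had
    obtain ⟨r, rfl⟩ := hsurj w hwc hwd
    obtain ⟨h1, h2⟩ := h.map_adj_iff.mp hw
    obtain ⟨j, l⟩ := r
    cases h1
    have hval := pathGraph_adj.mp h2
    congr 1
    rcases hee with ⟨rfl, _⟩ | ⟨rfl, _⟩ <;>
    · rcases fin3_cases l with rfl | rfl | rfl <;> simp_all <;> omega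
  · intro w hw
    by_cases hwc : w = c
    · exact absurd (hwc ▸ hw) hbc
    by_cases hwd : w = d
    · exact absurd (hwd ▸ hw) hbd
    obtain ⟨r, rfl⟩ := hsurj w hwc hwd
    obtain ⟨h1, h2⟩ := h.map_adj_iff.mp hw
    obtain ⟨j, l⟩ := r
    cases h1
    have hval := pathGraph_adj.mp h2
    rcases hee with ⟨rfl, rfl⟩ | ⟨rfl, rfl⟩ <;>
    · rcases fin3_cases l with rfl | rfl | rfl <;> simp_all <;> omega
  · intro w hw
    by_cases hwc : w = c
    · exact Or.inr (Or.inl hwc)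
    by_cases hwd : w = d
    · exact Or.inr (Or.inr hwd)
    left
    obtain ⟨r, rfl⟩ := hsurj w hwc hwd
    obtain ⟨h1, h2⟩ := h.map_adj_iff.mp hw
    obtain ⟨j, l⟩ := r
    cases h1
    have hval := pathGraph_adj.mp h2
    congr 1
    rcases hee with ⟨_, rfl⟩ | ⟨_, rfl⟩ <;>
    · rcases fin3_cases l with rfl | rfl | rfl <;> simp_all <;> omega

lemma structure1 {n s : ℕ} {F : SimpleGraph (Fin n)} (h : SP s ↪g F) (c d a b : Fin n)
    (hc : ∀ p, h p ≠ c) (hd : ∀ p, h p ≠ d)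
    (hsurj : ∀ w, w ≠ c → w ≠ d → ∃ p, h p = w)
    (hab : F.Adj a b) (hanc : a ≠ c) (hand : a ≠ d) (hbnc : b ≠ c) (hbnd : b ≠ d)
    (hac : ¬ F.Adj a c) (had : ¬ F.Adj a d) (hbc : ¬ F.Adj b c) (hbd : ¬ F.Adj b d) :
    ∃ a' b' x : Fin n, ((a' = a ∧ b' = b) ∨ (a' = b ∧ b' = a)) ∧
      x ≠ c ∧ x ≠ d ∧ x ≠ a ∧ x ≠ b ∧ F.Adj b' x ∧
      (∀ w, F.Adj a' w → w = b') ∧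
      (∀ w, F.Adj b' w → w = a' ∨ w = x) ∧
      (∀ w, F.Adj x w → w = b' ∨ w = c ∨ w = d) := by
  obtain ⟨p, hp⟩ := hsurj a hanc hand
  obtain ⟨q, hq⟩ := hsurj b hbnc hbnd
  have hpq : (SP s).Adj p q := h.map_adj_iff.mp (by rw [hp, hq]; exact hab)
  obtain ⟨i, k⟩ := p
  obtain ⟨j, l⟩ := q
  obtain ⟨h1, h2⟩ := hpq
  cases h1
  have hval := pathGraph_adj.mp h2
  have hinj := h.injective
  -- for each of the 4 possible (k,l), apply structure0
  rcases fin3_cases k with rfl | rfl | rfl <;> rcases fin3_cases l with rfl | rfl | rfl <;>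
      simp only [Fin.isValue] at hval <;>
      [skip; skip; skip; skip; skip; skip; skip; skip; skip] <;> first
  | (exfalso; revert hval; decide)
  | -- (k,l) = (0,1) : a = h(i,0) end, b = h(i,1) middle, x = h(i,2)
    (obtain ⟨hadj, hend, hmid, hthird⟩ := structure0 h c d hc hd hsurj i 0 2 (Or.inl ⟨rfl, rfl⟩)
        (hp ▸ hac) (hp ▸ had) (hq ▸ hbc) (hq ▸ hbd)
     refine ⟨a, b, h (i,2), Or.inl ⟨rfl, rfl⟩, hc _, hd _, ?_, ?_, hq ▸ hadj, ?_, ?_, ?_⟩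
     · rw [← hp]; intro hcon; have := hinj hcon; simp at this
     · rw [← hq]; intro hcon; have := hinj hcon; simp at this
     · rw [← hp, ← hq]; exact hend
     · rw [← hp, ← hq]; exact hmid
     · intro w hw; rcases hthird w hw with h | h | h
       · exact Or.inl (hq ▸ h)
       · exact Or.inr (Or.inl h)
       · exact Or.inr (Or.inr h))
  | -- (k,l) = (1,0) : a = h(i,1) middle, b = h(i,0) end, x = h(i,2)
    (obtain ⟨hadj, hend, hmid, hthird⟩ := structure0 h c d hc hd hsurj i 0 2 (Or.inl ⟨rfl, rfl⟩)
        (hq ▸ hbc) (hq ▸ hbd) (hp ▸ hac) (hp ▸ had)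
     refine ⟨b, a, h (i,2), Or.inr ⟨rfl, rfl⟩, hc _, hd _, ?_, ?_, hp ▸ hadj, ?_, ?_, ?_⟩
     · rw [← hp]; intro hcon; have := hinj hcon; simp at this
     · rw [← hq]; intro hcon; have := hinj hcon; simp at this
     · rw [← hp, ← hq]; exact hend
     · rw [← hp, ← hq]; exact hmid
     · intro w hw; rcases hthird w hw with h | h | h
       · exact Or.inl (hp ▸ h)
       · exact Or.inr (Or.inl h)
       · exact Or.inr (Or.inr h))
  | -- (k,l) = (1,2) : a = h(i,1) middle, b = h(i,2) end, x = h(i,0)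
    (obtain ⟨hadj, hend, hmid, hthird⟩ := structure0 h c d hc hd hsurj i 2 0 (Or.inr ⟨rfl, rfl⟩)
        (hq ▸ hbc) (hq ▸ hbd) (hp ▸ hac) (hp ▸ had)
     refine ⟨b, a, h (i,0), Or.inr ⟨rfl, rfl⟩, hc _, hd _, ?_, ?_, hp ▸ hadj, ?_, ?_, ?_⟩
     · rw [← hp]; intro hcon; have := hinj hcon; simp at this
     · rw [← hq]; intro hcon; have := hinj hcon; simp at this
     · rw [← hp, ← hq]; exact hend
     · rw [← hp, ← hq]; exact hmid
     · intro w hw; rcases hthird w hw with h | h | h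
       · exact Or.inl (hp ▸ h)
       · exact Or.inr (Or.inl h)
       · exact Or.inr (Or.inr h))
  | -- (k,l) = (2,1) : a = h(i,2) end, b = h(i,1) middle, x = h(i,0)
    (obtain ⟨hadj, hend, hmid, hthird⟩ := structure0 h c d hc hd hsurj i 2 0 (Or.inr ⟨rfl, rfl⟩)
        (hp ▸ hac) (hp ▸ had) (hq ▸ hbc) (hq ▸ hbd)
     refine ⟨a, b, h (i,0), Or.inl ⟨rfl, rfl⟩, hc _, hd _, ?_, ?_, hq ▸ hadj, ?_, ?_, ?_⟩
     · rw [← hp]; intro hcon; have := hinj hcon; simp at this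
     · rw [← hq]; intro hcon; have := hinj hcon; simp at this
     · rw [← hp, ← hq]; exact hend
     · rw [← hp, ← hq]; exact hmid
     · intro w hw; rcases hthird w hw with h | h | h
       · exact Or.inl (hq ▸ h)
       · exact Or.inr (Or.inl h)
       · exact Or.inr (Or.inr h))

lemma lower_bound {s n : ℕ} (hs : 1 ≤ s) (F : SimpleGraph (Fin n))
    (hF : StronglyArrows F (SP s) twoK2) : 3 * s + 3 ≤ n := by
  classical
  by_contra hn
  push_neg at hn
  -- Step A : the all-blue colouring yields an induced 2K2 in F
  rcases hF (fun _ => false) with ⟨f, hf⟩ | ⟨m2, -⟩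
  · have := hf (⟨0, hs⟩, 0) (⟨0, hs⟩, 1) ⟨rfl, path01⟩
    simp at this
  set A := m2 (0,0) with hA
  set B := m2 (0,1) with hB
  set C := m2 (1,0) with hC
  set D := m2 (1,1) with hD
  have hAB : F.Adj A B := m2.map_adj_iff.mpr (by decide)
  have hCD : F.Adj C D := m2.map_adj_iff.mpr (by decide)
  have hAC : ¬ F.Adj A C := fun hcon => absurd (m2.map_adj_iff.mp hcon) (by decide)
  have hAD : ¬ F.Adj A D := fun hcon => absurd (m2.map_adj_iff.mp hcon) (by decide)
  have hBC : ¬ F.Adj B C := fun hcon => absurd (m2.map_adj_iff.mp hcon) (by decide)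
  have hBD : ¬ F.Adj B D := fun hcon => absurd (m2.map_adj_iff.mp hcon) (by decide)
  have hACne : A ≠ C := fun hcon =>
    absurd (congrArg Prod.fst (m2.injective hcon)) (by decide)
  have hADne : A ≠ D := fun hcon =>
    absurd (congrArg Prod.fst (m2.injective hcon)) (by decide)
  have hBCne : B ≠ C := fun hcon =>
    absurd (congrArg Prod.fst (m2.injective hcon)) (by decide)
  have hBDne : B ≠ D := fun hcon =>
    absurd (congrArg Prod.fst (m2.injective hcon)) (by decide)
  have hABne : A ≠ B := hAB.ne
  have hCDne : C ≠ D := hCD.ne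
  -- Step B : for every edge uv, colouring all edges meeting {u,v} blue
  have key : ∀ u v : Fin n, F.Adj u v → ∃ g : SP s ↪g F, (∀ p, g p ≠ u) ∧ (∀ p, g p ≠ v) := by
    intro u v huv
    rcases hF (fun e => if u ∈ e ∨ v ∈ e then false else true) with ⟨g, hg⟩ | ⟨f, hfc⟩
    · have hng : ∀ a b, (SP s).Adj a b →
          u ∉ (s(g a, g b) : Sym2 (Fin n)) ∧ v ∉ (s(g a, g b) : Sym2 (Fin n)) := by
        intro a b hab
        have hc := hg a b hab
        by_cases h1 : u ∈ (s(g a, g b) : Sym2 (Fin n)) ∨ v ∈ (s(g a, g b) : Sym2 (Fin n))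
        · rw [if_pos h1] at hc; exact absurd hc (by simp)
        · push_neg at h1; exact h1
      exact ⟨g, avoid_vertex g u (fun a b hab => (hng a b hab).1),
        avoid_vertex g v (fun a b hab => (hng a b hab).2)⟩
    · exfalso
      have contra1 : ∀ (w : Fin n) (p q : Fin 2 × Fin 2), p.1 = 0 → q.1 = 1 →
          w = f p → w = f q → False := by
        intro w p q hp hq e1 e2
        have := congrArg Prod.fst (f.injective (e1.symm.trans e2))
        rw [hp, hq] at this
        exact absurd this (by decide)
      have contra2 : ∀ (p q : Fin 2 × Fin 2), p.1 = 0 → q.1 = 1 →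
          u = f p → v = f q → False := by
        intro p q hp hq e1 e2
        rw [e1, e2] at huv
        have := (f.map_adj_iff.mp huv).1
        rw [hp, hq] at this
        exact absurd this (by decide)
      have contra2' : ∀ (p q : Fin 2 × Fin 2), p.1 = 0 → q.1 = 1 →
          u = f q → v = f p → False := by
        intro p q hp hq e1 e2
        rw [e1, e2] at huv
        have := (f.map_adj_iff.mp huv.symm).1
        rw [hp, hq] at this
        exact absurd this (by decide)
      have h1 := hfc (0,0) (0,1) (by decide)
      have h2 := hfc (1,0) (1,1) (by decide)
      have m1 : u ∈ (s(f (0,0), f (0,1)) : Sym2 (Fin n)) ∨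
          v ∈ (s(f (0,0), f (0,1)) : Sym2 (Fin n)) := by
        by_contra hcon; rw [if_neg hcon] at h1; exact absurd h1 (by simp)
      have m2' : u ∈ (s(f (1,0), f (1,1)) : Sym2 (Fin n)) ∨
          v ∈ (s(f (1,0), f (1,1)) : Sym2 (Fin n)) := by
        by_contra hcon; rw [if_neg hcon] at h2; exact absurd h2 (by simp)
      rcases m1 with h | h <;> rcases Sym2.mem_iff.mp h with e1 | e1 <;>
        rcases m2' with h' | h' <;> rcases Sym2.mem_iff.mp h' with e2 | e2 <;>
        first
          | exact contra1 u _ _ rfl rfl e1 e2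
          | exact contra1 v _ _ rfl rfl e1 e2
          | exact contra2 _ _ rfl rfl e1 e2
          | exact contra2' _ _ rfl rfl e2 e1
  -- apply to the edge CD, then AB
  obtain ⟨g1, hg1C, hg1D⟩ := key C D hCD
  obtain ⟨g2, hg2A, hg2B⟩ := key A B hAB
  have hcount1 : 3 * s + 2 ≤ n := by
    have := card_avoid g1 g1.injective {C, D} (by
      intro p
      simp only [Finset.mem_insert, Finset.mem_singleton]
      push_neg
      exact ⟨hg1C p, hg1D p⟩)
    simpa [Finset.card_pair hCDne] using this
  have hneq : n = 3 * s + 2 := by omega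
  -- surjectivity of g1 and g2 onto the complements
  have mk_surj : ∀ (g : SP s ↪g F) (u v : Fin n), u ≠ v → (∀ p, g p ≠ u) → (∀ p, g p ≠ v) →
      ∀ w, w ≠ u → w ≠ v → ∃ p, g p = w := by
    intro g u v huvne hgu hgv w hwu hwv
    have hsub : Finset.univ.image g ⊆ Finset.univ \ {u, v} := by
      intro a ha
      obtain ⟨p, -, rfl⟩ := Finset.mem_image.mp ha
      simp only [Finset.mem_sdiff, Finset.mem_univ, true_and, Finset.mem_insert,
        Finset.mem_singleton]
      push_neg
      exact ⟨hgu p, hgv p⟩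
    have hcards : (Finset.univ \ {u, v} : Finset (Fin n)).card ≤ (Finset.univ.image g).card := by
      rw [Finset.card_sdiff_of_subset (Finset.subset_univ _),
        Finset.card_image_of_injective _ g.injective, Finset.card_pair huvne]
      simp [hneq, Fintype.card_prod, mul_comm]
    have himg := Finset.eq_of_subset_of_card_le hsub hcards
    have hw : w ∈ Finset.univ.image g := by
      rw [himg]
      simp [hwu, hwv]
    obtain ⟨p, -, hp⟩ := Finset.mem_image.mp hw
    exact ⟨p, hp⟩
  have hsur1 := mk_surj g1 C D hCDne hg1C hg1D
  have hsur2 := mk_surj g2 A B hABne hg2A hg2B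
  obtain ⟨a', b', x, perm1, hxC, hxD, hxA, hxB, hb'x, ha'', hb'', hx''⟩ :=
    structure1 g1 C D A B hg1C hg1D hsur1 hAB hACne hADne hBCne hBDne hAC hAD hBC hBD
  obtain ⟨c', d', y, perm2, hyA, hyB, hyC, hyD, hd'y, hc'', hd'', hy''⟩ :=
    structure1 g2 A B C D hg2A hg2B hsur2 hCD hACne.symm hBCne.symm hADne.symm hBDne.symm
      (fun h => hAC h.symm) (fun h => hBC h.symm) (fun h => hAD h.symm) (fun h => hBD h.symm)
  -- star-colouring blue-case helper
  have star_blue : ∀ (z : Fin n) (f : twoK2 ↪g F),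
      (∀ a b, twoK2.Adj a b →
        (if z ∈ (s(f a, f b) : Sym2 (Fin n)) then (false : Bool) else true) = false) → False := by
    intro z f hfc
    have h1 := hfc (0,0) (0,1) (by decide)
    have h2 := hfc (1,0) (1,1) (by decide)
    have m1 : z ∈ (s(f (0,0), f (0,1)) : Sym2 (Fin n)) := by
      by_contra hcon; rw [if_neg hcon] at h1; exact absurd h1 (by simp)
    have m2'' : z ∈ (s(f (1,0), f (1,1)) : Sym2 (Fin n)) := by
      by_contra hcon; rw [if_neg hcon] at h2; exact absurd h2 (by simp)
    rcases Sym2.mem_iff.mp m1 with e1 | e1 <;> rcases Sym2.mem_iff.mp m2'' with e2 | e2 <;>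
    · have := congrArg Prod.fst (f.injective (e1.symm.trans e2))
      exact absurd this (by decide)
  have star_red : ∀ (z : Fin n) (g : SP s ↪g F),
      (∀ a b, (SP s).Adj a b →
        (if z ∈ (s(g a, g b) : Sym2 (Fin n)) then (false : Bool) else true) = true) →
      ∀ p, g p ≠ z := by
    intro z g hg
    refine avoid_vertex g z (fun a b hab => ?_)
    have hc := hg a b hab
    intro hmem
    rw [if_pos hmem] at hc
    exact absurd hc (by simp)
  by_cases hxCD : F.Adj x C ∨ F.Adj x D
  · -- x is also the special vertex of the CD-side; star colouring at x
    have hxc'd' : F.Adj x c' ∨ F.Adj x d' := by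
      rcases perm2 with ⟨rfl, rfl⟩ | ⟨rfl, rfl⟩
      · exact hxCD
      · exact hxCD.symm
    have hxd' : F.Adj x d' := by
      rcases hxc'd' with h | h
      · exfalso
        have := hc'' x h.symm
        rcases perm2 with ⟨rfl, rfl⟩ | ⟨rfl, rfl⟩
        · exact hxD this
        · exact hxC this
      · exact h
    have hxy : x = y := by
      rcases hd'' x hxd'.symm with h | h
      · exfalso
        rcases perm2 with ⟨rfl, rfl⟩ | ⟨rfl, rfl⟩
        · exact hxC h
        · exact hxD h
      · exact h
    rcases hF (fun e => if x ∈ e then false else true) with ⟨g, hg⟩ | ⟨f, hfc⟩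
    · have hgx : ∀ p, g p ≠ x := star_red x g hg
      have h1 := not_in_image g b' a' x hgx hb'' ha''
      have h2 := not_in_image g d' c' x hgx
        (fun w hw => by
          rcases hd'' w hw with h | h
          · exact Or.inl h
          · exact Or.inr (h.trans hxy.symm)) hc''
      have havoid : ∀ p, g p ∉ ({x, A, B, C, D} : Finset (Fin n)) := by
        intro p
        simp only [Finset.mem_insert, Finset.mem_singleton]
        push_neg
        refine ⟨hgx p, ?_, ?_, ?_, ?_⟩
        · rcases perm1 with ⟨rfl, rfl⟩ | ⟨rfl, rfl⟩
          · exact h1.2 p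
          · exact h1.1 p
        · rcases perm1 with ⟨rfl, rfl⟩ | ⟨rfl, rfl⟩
          · exact h1.1 p
          · exact h1.2 p
        · rcases perm2 with ⟨rfl, rfl⟩ | ⟨rfl, rfl⟩
          · exact h2.2 p
          · exact h2.1 p
        · rcases perm2 with ⟨rfl, rfl⟩ | ⟨rfl, rfl⟩
          · exact h2.1 p
          · exact h2.2 p
      have hcard : ({x, A, B, C, D} : Finset (Fin n)).card = 5 := by
        rw [Finset.card_insert_of_notMem (by simp [hxA, hxB, hxC, hxD]),
          Finset.card_insert_of_notMem (by simp [hABne, hACne, hADne]),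
          Finset.card_insert_of_notMem (by simp [hBCne, hBDne]),
          Finset.card_pair hCDne]
      have := card_avoid g g.injective _ havoid
      rw [hcard] at this
      omega
    · exact star_blue x f hfc
  · -- x has no neighbours besides b'
    push_neg at hxCD
    have hx' : ∀ w, F.Adj x w → w = b' := by
      intro w hw
      rcases hx'' w hw with h | h | h
      · exact h
      · exact absurd (h ▸ hw) hxCD.1
      · exact absurd (h ▸ hw) hxCD.2
    rcases hF (fun e => if b' ∈ e then false else true) with ⟨g, hg⟩ | ⟨f, hfc⟩
    · have hgb : ∀ p, g p ≠ b' := star_red b' g hg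
      have hga : ∀ p, g p ≠ a' := by
        rintro ⟨i, k⟩ hk
        have hadj : F.Adj (g (i,k)) (g (i, if k = 1 then 0 else 1)) :=
          g.map_adj_iff.mpr (nbr_adj i k)
        rw [hk] at hadj
        exact hgb _ (ha'' _ hadj)
      have hgx : ∀ p, g p ≠ x := by
        rintro ⟨i, k⟩ hk
        have hadj : F.Adj (g (i,k)) (g (i, if k = 1 then 0 else 1)) :=
          g.map_adj_iff.mpr (nbr_adj i k)
        rw [hk] at hadj
        exact hgb _ (hx' _ hadj)
      have ha'b' : a' ≠ b' := by
        rcases perm1 with ⟨rfl, rfl⟩ | ⟨rfl, rfl⟩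
        · exact hABne
        · exact hABne.symm
      have hxa' : x ≠ a' := by
        rcases perm1 with ⟨rfl, rfl⟩ | ⟨rfl, rfl⟩
        · exact hxA
        · exact hxB
      have hxb' : x ≠ b' := by
        rcases perm1 with ⟨rfl, rfl⟩ | ⟨rfl, rfl⟩
        · exact hxB
        · exact hxA
      have havoid : ∀ p, g p ∉ ({x, a', b'} : Finset (Fin n)) := by
        intro p
        simp only [Finset.mem_insert, Finset.mem_singleton]
        push_neg
        exact ⟨hgx p, hga p, hgb p⟩
      have hcard : ({x, a', b'} : Finset (Fin n)).card = 3 := by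
        rw [Finset.card_insert_of_notMem (by simp [hxa', hxb']),
          Finset.card_pair ha'b']
      have := card_avoid g g.injective _ havoid
      rw [hcard] at this
      omega
    · exact star_blue b' f hfc

theorem stmt10' (s : ℕ) (hs : 1 ≤ s) :
    sInf {n : ℕ | ∃ F : SimpleGraph (Fin n),
      StronglyArrows F (SimpleGraph.Copies s (SimpleGraph.pathGraph 3)) twoK2} = 3 * s + 3 := by
  have hSet : (3*s+3) ∈ {n : ℕ | ∃ F : SimpleGraph (Fin n),
      StronglyArrows F (SimpleGraph.Copies s (SimpleGraph.pathGraph 3)) twoK2} := upper_mem s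
  have h1 := Nat.sInf_le hSet
  obtain ⟨F, hF⟩ := Nat.sInf_mem (⟨_, hSet⟩ : Set.Nonempty _)
  exact le_antisymm h1 (lower_bound hs F hF)

theorem stmt10 (s : ℕ) (hs : 1 ≤ s) :
    IR (SimpleGraph.Copies s (SimpleGraph.pathGraph 3)) twoK2 = 3 * s + 3 := by
  unfold IR
  exact stmt10' s hs
end

section
/- Let G and H be connected graphs, t a positive integer, and for i = 1,…,t let f_i = IR(G, iH). Suppose f_t < min over all partitions t = t_1 + … + t_m with m ≥ 2 of the sum f_{t_1} + … + f_{t_m}. Then every graph F of order f_t with F →ind (G, tH) is connected. -/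
open SimpleGraph

def copiesEmb {γ : Type*} (H : SimpleGraph γ) {i j : ℕ} (h : i ≤ j) :
    SimpleGraph.Copies i H ↪g SimpleGraph.Copies j H where
  toFun := fun p => (Fin.castLE h p.1, p.2)
  inj' := by
    rintro ⟨a, x⟩ ⟨b, y⟩ hp
    simp only [Prod.mk.injEq, Fin.castLE_inj] at hp
    exact Prod.ext hp.1 hp.2
  map_rel_iff' := by
    rintro ⟨a, x⟩ ⟨b, y⟩
    show (Fin.castLE h a = Fin.castLE h b ∧ H.Adj x y) ↔ (a = b ∧ H.Adj x y)
    simp [SimpleGraph.Copies, Fin.castLE_inj]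

lemma StronglyArrows.mono_copies {α β γ : Type*} {F : SimpleGraph α} {G : SimpleGraph β}
    {H : SimpleGraph γ} {i j : ℕ} (h : i ≤ j)
    (hF : StronglyArrows F G (SimpleGraph.Copies j H)) :
    StronglyArrows F G (SimpleGraph.Copies i H) := by
  intro c
  rcases hF c with ⟨f, hf⟩ | ⟨f, hf⟩
  · exact Or.inl ⟨f, hf⟩
  · exact Or.inr ⟨f.comp (copiesEmb H h), fun a b hab =>
      hf _ _ ((copiesEmb H h).map_rel_iff.mpr hab)⟩

lemma IR_le_card {α β γ : Type*} [Fintype α] {F : SimpleGraph α} {G : SimpleGraph β}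
    {H : SimpleGraph γ} (hF : StronglyArrows F G H) : IR G H ≤ Fintype.card α := by
  apply Nat.sInf_le
  let e := Fintype.equivFin α
  let F' : SimpleGraph (Fin (Fintype.card α)) :=
    { Adj := fun x y => F.Adj (e.symm x) (e.symm y)
      symm := ⟨fun x y h => F.symm.symm _ _ h⟩
      loopless := ⟨fun x h => F.loopless.irrefl _ h⟩ }
  let iso : F ≃g F' := ⟨e, by intro a b; simp [F']⟩
  refine ⟨F', fun c => ?_⟩
  rcases hF (fun p => c (p.map e)) with ⟨f, hf⟩ | ⟨f, hf⟩
  · refine Or.inl ⟨iso.toEmbedding.comp f, fun a b hab => ?_⟩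
    have := hf a b hab
    show c s(e (f a), e (f b)) = true
    simpa [Sym2.map_pair_eq] using this
  · refine Or.inr ⟨iso.toEmbedding.comp f, fun a b hab => ?_⟩
    have := hf a b hab
    show c s(e (f a), e (f b)) = false
    simpa [Sym2.map_pair_eq] using this

theorem stmt18 {β γ : Type*} [Fintype β] [Fintype γ]
    (G : SimpleGraph β) (H : SimpleGraph γ) (hG : G.Connected) (hH : H.Connected)
    (t : ℕ) (ht : 1 ≤ t)
    (hmin : ∀ L : List ℕ, 2 ≤ L.length → (∀ x ∈ L, 1 ≤ x) → L.sum = t →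
      IR G (SimpleGraph.Copies t H) <
        (L.map fun i => IR G (SimpleGraph.Copies i H)).sum) :
    ∀ F : SimpleGraph (Fin (IR G (SimpleGraph.Copies t H))),
      StronglyArrows F G (SimpleGraph.Copies t H) → F.Connected := by
  classical
  set n := IR G (SimpleGraph.Copies t H) with hn
  intro F hFa
  by_contra hFc
  obtain ⟨a0⟩ := hG.nonempty
  obtain ⟨x0⟩ := hH.nonempty
  haveI : Nonempty γ := ⟨x0⟩
  have hnpos : 0 < n := by
    rcases Nat.eq_zero_or_pos n with h0 | h
    · exfalso
      rcases hFa (fun _ => true) with ⟨f, _⟩ | ⟨f, _⟩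
      · exact absurd (f a0).2 (by omega)
      · exact absurd (f (⟨0, ht⟩, x0)).2 (by omega)
    · exact h
  -- G has an edge (else handle separately)
  by_cases hGE : ∃ a b, G.Adj a b
  swap
  · push_neg at hGE
    have hβ : ∀ a b : β, a = b := by
      intro a b
      obtain ⟨w⟩ := hG.preconnected a b
      cases w with
      | nil => rfl
      | cons h _ => exact absurd h (hGE _ _)
    have h1 : StronglyArrows (⊥ : SimpleGraph (Fin 1)) G (SimpleGraph.Copies t H) := by
      intro c
      refine Or.inl ⟨⟨⟨fun _ => 0, fun a b _ => hβ a b⟩, ?_⟩,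
        fun a b hab => absurd hab (hGE a b)⟩
      intro a b
      constructor
      · intro h; exact absurd h (by simp)
      · intro h; exact absurd h (hGE a b)
    have hle : n ≤ 1 := by
      have := IR_le_card h1
      simpa [hn] using this
    apply hFc
    rw [connected_iff]
    refine ⟨fun u v => ?_, ⟨⟨0, hnpos⟩⟩⟩
    have : u = v := Fin.ext (by omega)
    subst this
    exact Reachable.refl _
  obtain ⟨ae, be, hadjG⟩ := hGE
  -- component machinery
  haveI : Fintype F.ConnectedComponent := Fintype.ofFinite _
  let mk : Fin n → F.ConnectedComponent := F.connectedComponentMk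
  let fib : F.ConnectedComponent → Finset (Fin n) :=
    fun K => Finset.univ.filter (fun v => mk v = K)
  have hmem : ∀ (K) (v : Fin n), v ∈ (↑(fib K) : Set (Fin n)) ↔ mk v = K := by
    intro K v; simp [fib]
  let FI : (K : F.ConnectedComponent) → SimpleGraph (↑(fib K) : Set (Fin n)) :=
    fun K => F.induce (↑(fib K) : Set (Fin n))
  let SA : F.ConnectedComponent → ℕ → Prop :=
    fun K i => StronglyArrows (FI K) G (SimpleGraph.Copies i H)
  have hS0 : ∀ K, SA K 0 := by
    intro K c
    refine Or.inr ⟨⟨Function.Embedding.ofIsEmpty, fun {a b} => isEmptyElim a⟩,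
      fun a b _ => isEmptyElim a⟩
  have hcoe : ∀ K, Fintype.card (↑(fib K) : Set (Fin n)) = (fib K).card := by
    intro K
    rw [← Nat.card_eq_fintype_card, Nat.card_coe_set_eq, Set.ncard_coe_finset]
  have hcard : ∀ K, (fib K).card ≤ n := by
    intro K
    have := Finset.card_le_card (Finset.subset_univ (fib K))
    simpa using this
  have hSbdd : ∀ K, ∀ i, SA K i → i ≤ n := by
    intro K i hi
    rcases hi (fun _ => false) with ⟨f, hf⟩ | ⟨f, hf⟩
    · exact absurd (hf ae be hadjG) (by simp)
    · have h1 : Fintype.card (Fin i × γ) ≤ Fintype.card (↑(fib K) : Set (Fin n)) :=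
        Fintype.card_le_of_embedding f.toEmbedding
      have h2 : Fintype.card (↑(fib K) : Set (Fin n)) = (fib K).card := hcoe K
      have h3 : i ≤ Fintype.card (Fin i × γ) := by
        rw [Fintype.card_prod, Fintype.card_fin]
        exact Nat.le_mul_of_pos_right _ Fintype.card_pos
      have := hcard K
      omega
  let tK : F.ConnectedComponent → ℕ := fun K => sSup {i | SA K i}
  have htK : ∀ K, SA K (tK K) := by
    intro K
    exact Nat.sSup_mem ⟨0, hS0 K⟩ ⟨n, fun i hi => hSbdd K i hi⟩
  have hnot : ∀ K, ¬ SA K (tK K + 1) := by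
    intro K h
    have : tK K + 1 ≤ tK K := le_csSup ⟨n, fun i hi => hSbdd K i hi⟩ h
    omega
  have hex : ∀ K, ∃ c : Sym2 (↑(fib K) : Set (Fin n)) → Bool,
      (∀ f : G ↪g FI K, ∃ a b, G.Adj a b ∧ ¬ c s(f a, f b) = true) ∧
      (∀ f : SimpleGraph.Copies (tK K + 1) H ↪g FI K,
        ∃ a b, (SimpleGraph.Copies (tK K + 1) H).Adj a b ∧ ¬ c s(f a, f b) = false) := by
    intro K
    have h := hnot K
    unfold SA StronglyArrows at h
    push_neg at h
    exact h
  choose c' hc'red hc'blue using hex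
  -- global colouring
  let d : Fin n → Fin n → Bool := fun u v =>
    if h : mk v = mk u then
      c' (mk u) s(⟨u, (hmem _ _).mpr rfl⟩, ⟨v, (hmem _ _).mpr h⟩)
    else true
  have hKey : ∀ (K) (u v : Fin n) (pu : u ∈ (↑(fib K) : Set (Fin n)))
      (pv : v ∈ (↑(fib K) : Set (Fin n))), d u v = c' K s(⟨u, pu⟩, ⟨v, pv⟩) := by
    intro K u v pu pv
    have hu : mk u = K := (hmem K u).mp pu
    have hv : mk v = K := (hmem K v).mp pv
    subst hu
    have h : mk v = mk u := hv
    simp only [d, dif_pos h]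
  have hdsymm : ∀ u v, d u v = d v u := by
    intro u v
    by_cases h : mk v = mk u
    · have pu : u ∈ (↑(fib (mk u)) : Set (Fin n)) := (hmem _ _).mpr rfl
      have pv : v ∈ (↑(fib (mk u)) : Set (Fin n)) := (hmem _ _).mpr h
      rw [hKey (mk u) u v pu pv, hKey (mk u) v u pv pu, Sym2.eq_swap]
    · have h' : ¬ mk u = mk v := fun e => h e.symm
      simp [d, h, h']
  let c : Sym2 (Fin n) → Bool := Sym2.lift ⟨d, hdsymm⟩
  have hclift : ∀ u v, c s(u, v) = d u v := fun u v => Sym2.lift_mk _ _ _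
  rcases hFa c with ⟨f, hf⟩ | ⟨f, hf⟩
  · -- red case: contradiction with component colouring
    have hmemf : ∀ a : β, f a ∈ (↑(fib (mk (f a0))) : Set (Fin n)) := fun a =>
      (hmem _ _).mpr (ConnectedComponent.sound ((hG.preconnected a a0).map f.toHom))
    let f' : G ↪g FI (mk (f a0)) :=
      { toFun := fun a => ⟨f a, hmemf a⟩
        inj' := fun a b h => f.injective (congrArg Subtype.val h)
        map_rel_iff' := fun {a b} => by
          show F.Adj (f a) (f b) ↔ G.Adj a b
          exact f.map_rel_iff }
    obtain ⟨a, b, hab, hne⟩ := hc'red (mk (f a0)) f'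
    apply hne
    show c' (mk (f a0)) s(⟨f a, hmemf a⟩, ⟨f b, hmemf b⟩) = true
    rw [← hKey (mk (f a0)) (f a) (f b) (hmemf a) (hmemf b), ← hclift]
    exact hf a b hab
  · -- blue case
    let φ : Fin t → F.ConnectedComponent := fun j => mk (f (j, x0))
    have hφ : ∀ j x, mk (f (j, x)) = φ j := by
      intro j x
      apply ConnectedComponent.sound
      let hom : H →g SimpleGraph.Copies t H :=
        { toFun := fun y => (j, y), map_rel' := fun h => ⟨rfl, h⟩ }
      have hr : (SimpleGraph.Copies t H).Reachable (j, x) (j, x0) :=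
        (hH.preconnected x x0).map hom
      exact hr.map f.toHom
    let A : F.ConnectedComponent → Finset (Fin t) :=
      fun K => Finset.univ.filter (fun j => φ j = K)
    have hsum : ∑ K, (A K).card = t := by
      have := Finset.card_eq_sum_card_fiberwise
        (f := φ) (s := Finset.univ) (t := Finset.univ) (fun x _ => Finset.mem_univ _)
      simpa [A] using this.symm
    have hAle : ∀ K, (A K).card ≤ tK K := by
      intro K
      by_contra hgt
      push_neg at hgt
      let e : Fin (A K).card ≃ ↑(A K) := (A K).equivFin.symm
      have hmemA : ∀ k : Fin (A K).card, φ ↑(e k) = K :=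
        fun k => (Finset.mem_filter.mp (e k).2).2
      have hmemg : ∀ p : Fin (A K).card × γ,
          f (↑(e p.1), p.2) ∈ (↑(fib K) : Set (Fin n)) := by
        intro p
        rw [hmem, hφ]
        exact hmemA p.1
      let g : SimpleGraph.Copies ((A K).card) H ↪g FI K :=
        { toFun := fun p => ⟨f (↑(e p.1), p.2), hmemg p⟩
          inj' := by
            rintro ⟨k, x⟩ ⟨k', x'⟩ hp
            have h1 := f.injective (congrArg Subtype.val hp)
            have h2 : ((e k : Fin t), x) = ((e k' : Fin t), x') := h1
            rw [Prod.mk.injEq] at h2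
            have h3 : e k = e k' := Subtype.ext h2.1
            rw [Prod.mk.injEq]
            exact ⟨e.injective h3, h2.2⟩
          map_rel_iff' := by
            rintro ⟨k, x⟩ ⟨k', x'⟩
            show F.Adj (f (↑(e k), x)) (f (↑(e k'), x')) ↔ _
            rw [f.map_rel_iff]
            show ((e k : Fin t) = ↑(e k') ∧ H.Adj x x') ↔ (k = k' ∧ H.Adj x x')
            constructor
            · rintro ⟨h1, h2⟩
              exact ⟨e.injective (Subtype.ext h1), h2⟩
            · rintro ⟨h1, h2⟩
              exact ⟨by rw [h1], h2⟩ }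
      obtain ⟨a, b, hab, hne⟩ := hc'blue K (g.comp (copiesEmb H hgt))
      apply hne
      have hab2 : (SimpleGraph.Copies ((A K).card) H).Adj
          (copiesEmb H hgt a) (copiesEmb H hgt b) :=
        (copiesEmb H hgt).map_rel_iff.mpr hab
      set a' := copiesEmb H hgt a with ha'
      set b' := copiesEmb H hgt b with hb'
      have habT : (SimpleGraph.Copies t H).Adj ((e a'.1 : Fin t), a'.2)
          ((e b'.1 : Fin t), b'.2) := ⟨by rw [hab2.1], hab2.2⟩
      show c' K s(⟨f ((e a'.1 : Fin t), a'.2), hmemg a'⟩,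
        ⟨f ((e b'.1 : Fin t), b'.2), hmemg b'⟩) = false
      rw [← hKey K _ _ (hmemg a') (hmemg b'), ← hclift]
      exact hf _ _ habT
    -- endgame
    by_cases hbig : ∃ K0, t ≤ (A K0).card
    · obtain ⟨K0, hK0⟩ := hbig
      have h1 : StronglyArrows (FI K0) G (SimpleGraph.Copies t H) :=
        StronglyArrows.mono_copies (le_trans hK0 (hAle K0)) (htK K0)
      have h2 : n ≤ (fib K0).card := by
        have h3 := IR_le_card h1
        rw [hcoe K0] at h3
        omega
      have hpre : ¬ F.Preconnected := by
        intro hp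
        exact hFc ((connected_iff F).mpr ⟨hp, ⟨⟨0, hnpos⟩⟩⟩)
      rw [SimpleGraph.Preconnected] at hpre
      push_neg at hpre
      obtain ⟨u, v, huv⟩ := hpre
      have hnecc : mk u ≠ mk v := fun h => huv (ConnectedComponent.exact h)
      have hw : ∃ w, w ∉ fib K0 := by
        by_cases h : mk u = K0
        · refine ⟨v, ?_⟩
          simp only [fib, Finset.mem_filter]
          rintro ⟨-, h2⟩
          exact hnecc (h.trans h2.symm)
        · refine ⟨u, ?_⟩
          simp only [fib, Finset.mem_filter]
          rintro ⟨-, h2⟩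
          exact h h2
      obtain ⟨w, hw⟩ := hw
      have hlt : (fib K0).card < n := by
        have hss : fib K0 ⊂ Finset.univ := by
          refine Finset.ssubset_univ_iff.mpr ?_
          intro h
          rw [h] at hw
          exact hw (Finset.mem_univ w)
        have := Finset.card_lt_card hss
        simpa using this
      omega
    · push_neg at hbig
      let P : Finset F.ConnectedComponent :=
        Finset.univ.filter (fun K => 0 < (A K).card)
      have hsumP : ∑ K ∈ P, (A K).card = t :=
        (Finset.sum_filter_of_ne (fun K _ h => Nat.pos_of_ne_zero h)).trans hsum
      have hP2 : 2 ≤ P.card := by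
        by_contra h
        push_neg at h
        have hb : ∀ K ∈ P, (A K).card ≤ t - 1 := by
          intro K _
          have := hbig K
          omega
        have := Finset.sum_le_card_nsmul P (fun K => (A K).card) (t - 1) hb
        rw [hsumP] at this
        have hPc : P.card ≤ 1 := by omega
        have h4 : t ≤ P.card * (t - 1) := by simpa [smul_eq_mul] using this
        have h5 : P.card * (t - 1) ≤ 1 * (t - 1) := Nat.mul_le_mul_right _ hPc
        omega
      let L : List ℕ := P.toList.map (fun K => (A K).card)
      have hL1 : 2 ≤ L.length := by
        simpa [L, Finset.length_toList] using hP2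
      have hL2 : ∀ x ∈ L, 1 ≤ x := by
        intro x hx
        simp only [L, List.mem_map] at hx
        obtain ⟨K, hK, rfl⟩ := hx
        have := (Finset.mem_filter.mp (Finset.mem_toList.mp hK)).2
        omega
      have hL3 : L.sum = t := by
        rw [← hsumP]
        exact Finset.sum_map_toList P (fun K => (A K).card)
      have hmain := hmin L hL1 hL2 hL3
      have hKb : ∀ K ∈ P, IR G (SimpleGraph.Copies ((A K).card) H) ≤ (fib K).card := by
        intro K _
        have h1 : StronglyArrows (FI K) G (SimpleGraph.Copies ((A K).card) H) :=
          StronglyArrows.mono_copies (hAle K) (htK K)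
        have h3 := IR_le_card h1
        rw [hcoe K] at h3
        exact h3
      have hfibsum : ∑ K ∈ P, (fib K).card ≤ n := by
        have h1 : ∑ K ∈ P, (fib K).card ≤ ∑ K, (fib K).card :=
          Finset.sum_le_sum_of_subset (Finset.filter_subset _ _)
        have h2 : ∑ K, (fib K).card = n := by
          have := Finset.card_eq_sum_card_fiberwise
            (f := mk) (s := Finset.univ) (t := Finset.univ) (fun x _ => Finset.mem_univ _)
          simpa [fib] using this.symm
        omega
      have hfin : (L.map fun i => IR G (SimpleGraph.Copies i H)).sum ≤ n := by
        have h0 : (L.map fun i => IR G (SimpleGraph.Copies i H)).sum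
            = ∑ K ∈ P, IR G (SimpleGraph.Copies ((A K).card) H) := by
          rw [← Finset.sum_map_toList]
          simp [L, List.map_map, Function.comp]
        rw [h0]
        calc ∑ K ∈ P, IR G (SimpleGraph.Copies ((A K).card) H)
            ≤ ∑ K ∈ P, (fib K).card := Finset.sum_le_sum hKb
          _ ≤ n := hfibsum
      omega
end
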